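/- The real numbers ℝ, with their usual strict order, addition, zero, multiplication and one, form a streak, and ℝ is a terminal streak: for every streak X there exists exactly one prestreak morphism f : X → ℝ (a map preserving <, +, 0, 1, and products of positive elements). -/

import Mathlib

/-- A prestreak: a strict order (asymmetric and cotransitive) together with a
commutative additive monoid structure and a commutative multiplicative monoid
structure on the positive part, compatible with the order.  (The intrinsic
topology conditions of the paper are omitted, being vacuous in the classical
set-theoretic setting.) -/
structure Prestreak (X : Type*) where
  lt : X → X → Prop
  add : X → X → X
  zero : X
  mul : X → X → X
  one : X
  lt_asymm : ∀ a b, ¬ (lt a b ∧ lt b a)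
  lt_cotrans : ∀ a b x, lt a b → lt a x ∨ lt x b
  add_comm : ∀ a b, add a b = add b a
  add_assoc : ∀ a b c, add (add a b) c = add a (add b c)
  add_zero : ∀ a, add a zero = a
  zero_lt_one : lt zero one
  mul_pos : ∀ a b, lt zero a → lt zero b → lt zero (mul a b)
  mul_comm : ∀ a b, lt zero a → lt zero b → mul a b = mul b a
  mul_assoc : ∀ a b c, lt zero a → lt zero b → lt zero c →
    mul (mul a b) c = mul a (mul b c)
  mul_one : ∀ a, lt zero a → mul a one = a
  mul_add : ∀ a b c, lt zero a → lt zero b → lt zero c →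
    mul (add a b) c = add (mul a c) (mul b c)
  add_lt_add_iff : ∀ a b x, (lt (add a x) (add b x) ↔ lt a b)
  mul_lt_mul_iff : ∀ a b x, lt zero a → lt zero b → lt zero x →
    (lt (mul a x) (mul b x) ↔ lt a b)

namespace Prestreak

variable {X : Type*}

/-- Multiplication by a natural number: `0·a = 0`, `(n+1)·a = n·a + a`. -/
def nsmul (P : Prestreak X) : ℕ → X → X
  | 0, _ => P.zero
  | n + 1, a => P.add (nsmul P n a) a

/-- The canonical image of a natural number, `n ↦ n·1`. -/
def ofNat (P : Prestreak X) (n : ℕ) : X := P.nsmul n P.one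

/-- Comparison `x < q` of an element of a prestreak with a rational number,
using the canonical representation `q = (q.num⁺ − q.num⁻)/q.den`:
`x < (a−b)/c  :=  c·x + b < a`. -/
def ltQ (P : Prestreak X) (x : X) (q : ℚ) : Prop :=
  P.lt (P.add (P.nsmul q.den x) (P.ofNat ((-q.num).toNat))) (P.ofNat q.num.toNat)

/-- Comparison `q < x` of a rational with an element of a prestreak:
`(a−b)/c < x  :=  a < c·x + b`. -/
def qLt (P : Prestreak X) (q : ℚ) (x : X) : Prop :=
  P.lt (P.ofNat q.num.toNat) (P.add (P.nsmul q.den x) (P.ofNat ((-q.num).toNat)))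

/-- The archimedean property for prestreaks. -/
def Archimedean (P : Prestreak X) : Prop :=
  ∀ a b c d : X, P.lt b d →
    ∃ n : ℕ, P.lt (P.add a (P.nsmul n b)) (P.add c (P.nsmul n d))

/-- Tightness: antisymmetry of `≤` (where `a ≤ b := ¬ b < a`).
A streak is a tight archimedean prestreak. -/
def Tight (P : Prestreak X) : Prop :=
  ∀ a b : X, ¬ P.lt a b → ¬ P.lt b a → a = b

/-- The apartness relation `a # b := a < b ∨ b < a`. -/
def Apart (P : Prestreak X) (a b : X) : Prop := P.lt a b ∨ P.lt b a

/-- A morphism of prestreaks: preserves `<`, `+`, `0`, `1` and products of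
positive elements. -/
def IsHom {Y : Type*} (P : Prestreak X) (Q : Prestreak Y) (f : X → Y) : Prop :=
  (∀ a b, P.lt a b → Q.lt (f a) (f b)) ∧
  (∀ a b, f (P.add a b) = Q.add (f a) (f b)) ∧
  f P.zero = Q.zero ∧ f P.one = Q.one ∧
  (∀ a b, P.lt P.zero a → P.lt P.zero b → f (P.mul a b) = Q.mul (f a) (f b))

/-- A multiplicative structure on a prestreak: a total multiplication which is
commutative, associative, distributes over addition, has unit `1`, restricts to
the given multiplication on positive elements, and satisfies the multiplicity
condition. -/
def IsMultiplicative (P : Prestreak X) (tmul : X → X → X) : Prop :=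
  (∀ a b, tmul a b = tmul b a) ∧
  (∀ a b c, tmul (tmul a b) c = tmul a (tmul b c)) ∧
  (∀ a b c, tmul (P.add a b) c = P.add (tmul a c) (tmul b c)) ∧
  (∀ a, tmul a P.one = a) ∧
  (∀ a b, P.lt P.zero a → P.lt P.zero b → tmul a b = P.mul a b) ∧
  (∀ a b c d, P.lt b a → P.lt d c →
    P.lt (P.add (tmul a d) (tmul b c)) (P.add (tmul a c) (tmul b d)))

end Prestreak

universe u

/-- The real numbers with their usual strict order, addition, zero,
multiplication and one form a prestreak. -/
noncomputable def realPrestreak : Prestreak ℝ where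
  lt := (· < ·)
  add := (· + ·)
  zero := 0
  mul := (· * ·)
  one := 1
  lt_asymm := fun a b h => lt_asymm h.1 h.2
  lt_cotrans := fun a b x h =>
    (lt_or_ge a x).imp id fun hxa => lt_of_le_of_lt hxa h
  add_comm := fun a b => _root_.add_comm a b
  add_assoc := fun a b c => _root_.add_assoc a b c
  add_zero := fun a => _root_.add_zero a
  zero_lt_one := one_pos
  mul_pos := fun a b ha hb => _root_.mul_pos ha hb
  mul_comm := fun a b _ _ => _root_.mul_comm a b
  mul_assoc := fun a b c _ _ _ => _root_.mul_assoc a b c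
  mul_one := fun a _ => _root_.mul_one a
  mul_add := fun a b c _ _ _ => _root_.add_mul a b c
  add_lt_add_iff := fun a b x => add_lt_add_iff_right x
  mul_lt_mul_iff := fun a b x _ _ hx => mul_lt_mul_iff_of_pos_right hx


namespace Prestreak

variable {X : Type*} (P : Prestreak X)

lemma lt_irrefl' (a : X) : ¬ P.lt a a := fun h => P.lt_asymm a a ⟨h, h⟩

lemma asymm' {a b : X} (h : P.lt a b) : ¬ P.lt b a := fun h' => P.lt_asymm a b ⟨h, h'⟩

lemma lt_trans' {a b c : X} (h1 : P.lt a b) (h2 : P.lt b c) : P.lt a c :=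
  (P.lt_cotrans a b c h1).resolve_right (P.asymm' h2)

lemma le_lt' {a b c : X} (h1 : ¬ P.lt b a) (h2 : P.lt b c) : P.lt a c :=
  (P.lt_cotrans b c a h2).resolve_left h1

lemma lt_le' {a b c : X} (h1 : P.lt a b) (h2 : ¬ P.lt c b) : P.lt a c :=
  (P.lt_cotrans a b c h1).resolve_right h2

lemma zero_add' (a : X) : P.add P.zero a = a := by
  rw [P.add_comm]; exact P.add_zero a

lemma add_right_comm' (a b c : X) : P.add (P.add a b) c = P.add (P.add a c) b := by
  rw [P.add_assoc, P.add_comm b c, ← P.add_assoc]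

lemma add_add_add_comm' (a b c d : X) :
    P.add (P.add a b) (P.add c d) = P.add (P.add a c) (P.add b d) := by
  rw [P.add_assoc, ← P.add_assoc b c d, P.add_comm b c, P.add_assoc c b d, ← P.add_assoc]

lemma add_lt_left_iff (x a b : X) : P.lt (P.add x a) (P.add x b) ↔ P.lt a b := by
  rw [P.add_comm x a, P.add_comm x b]; exact P.add_lt_add_iff a b x

lemma addlt {a b c d : X} (h1 : P.lt a b) (h2 : P.lt c d) :
    P.lt (P.add a c) (P.add b d) :=
  P.lt_trans' ((P.add_lt_add_iff a b c).2 h1) ((P.add_lt_left_iff b c d).2 h2)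

lemma addle {a b c d : X} (h1 : ¬ P.lt b a) (h2 : ¬ P.lt d c) :
    ¬ P.lt (P.add b d) (P.add a c) := fun h => by
  rcases P.lt_cotrans _ _ (P.add a d) h with h' | h'
  · exact h1 ((P.add_lt_add_iff b a d).1 h')
  · exact h2 ((P.add_lt_left_iff a d c).1 h')

lemma addltle {a b c d : X} (h1 : P.lt a b) (h2 : ¬ P.lt d c) :
    P.lt (P.add a c) (P.add b d) :=
  P.lt_le' ((P.add_lt_add_iff a b c).2 h1) (fun h => h2 ((P.add_lt_left_iff b d c).1 h))

lemma nsmul_zero'' (n : ℕ) : P.nsmul n P.zero = P.zero := by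
  induction n with
  | zero => rfl
  | succ k ih =>
    show P.add (P.nsmul k P.zero) P.zero = P.zero
    rw [ih, P.add_zero]

lemma nsmul_one' (x : X) : P.nsmul 1 x = x := by
  show P.add P.zero x = x
  exact P.zero_add' x

lemma nsmul_add' (n : ℕ) (x y : X) :
    P.nsmul n (P.add x y) = P.add (P.nsmul n x) (P.nsmul n y) := by
  induction n with
  | zero => show P.zero = P.add P.zero P.zero; rw [P.add_zero]
  | succ k ih =>
    show P.add (P.nsmul k (P.add x y)) (P.add x y)
        = P.add (P.add (P.nsmul k x) x) (P.add (P.nsmul k y) y)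
    rw [ih, P.add_add_add_comm']

lemma nsmul_addn (m n : ℕ) (x : X) :
    P.nsmul (m + n) x = P.add (P.nsmul m x) (P.nsmul n x) := by
  induction n with
  | zero => show P.nsmul m x = P.add (P.nsmul m x) P.zero; rw [P.add_zero]
  | succ k ih =>
    show P.add (P.nsmul (m + k) x) x = P.add (P.nsmul m x) (P.add (P.nsmul k x) x)
    rw [ih, P.add_assoc]

lemma nsmul_mul (m n : ℕ) (x : X) : P.nsmul (m * n) x = P.nsmul m (P.nsmul n x) := by
  induction m with
  | zero => rw [Nat.zero_mul]; rfl
  | succ k ih =>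
    rw [Nat.succ_mul, P.nsmul_addn, ih]
    rfl

lemma nsmul_le {a b : X} (h : ¬ P.lt b a) (n : ℕ) :
    ¬ P.lt (P.nsmul n b) (P.nsmul n a) := by
  induction n with
  | zero => exact P.lt_irrefl' _
  | succ k ih => exact P.addle ih h

lemma nsmul_lt {a b : X} (h : P.lt a b) {n : ℕ} (hn : 0 < n) :
    P.lt (P.nsmul n a) (P.nsmul n b) := by
  induction n with
  | zero => exact absurd hn (by omega)
  | succ k ih =>
    rcases Nat.eq_zero_or_pos k with hk | hk
    · subst hk
      show P.lt (P.add P.zero a) (P.add P.zero b)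
      exact (P.add_lt_left_iff _ _ _).2 h
    · exact P.addlt (ih hk) h

lemma nsmul_lt_iff {a b : X} {n : ℕ} (hn : 0 < n) :
    P.lt (P.nsmul n a) (P.nsmul n b) ↔ P.lt a b :=
  ⟨fun h => by_contra fun h' => P.nsmul_le h' n h, fun h => P.nsmul_lt h hn⟩

lemma ofNat_zero' : P.ofNat 0 = P.zero := rfl

lemma ofNat_one' : P.ofNat 1 = P.one := P.nsmul_one' P.one

lemma ofNat_add' (m n : ℕ) : P.ofNat (m + n) = P.add (P.ofNat m) (P.ofNat n) :=
  P.nsmul_addn m n P.one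

lemma nsmul_ofNat (k m : ℕ) : P.nsmul k (P.ofNat m) = P.ofNat (k * m) :=
  (P.nsmul_mul k m P.one).symm

lemma ofNat_pos {n : ℕ} (hn : 0 < n) : P.lt P.zero (P.ofNat n) := by
  induction n with
  | zero => exact absurd hn (by omega)
  | succ k ih =>
    rcases Nat.eq_zero_or_pos k with hk | hk
    · subst hk; rw [P.ofNat_one']; exact P.zero_lt_one
    · have h := P.addlt (ih hk) P.zero_lt_one
      rw [P.add_zero] at h
      exact h

lemma ofNat_nonneg (n : ℕ) : ¬ P.lt (P.ofNat n) P.zero := by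
  rcases Nat.eq_zero_or_pos n with hn | hn
  · subst hn; exact P.lt_irrefl' _
  · exact P.asymm' (P.ofNat_pos hn)

lemma ofNat_lt' {m n : ℕ} (h : m < n) : P.lt (P.ofNat m) (P.ofNat n) := by
  have e : n = m + (n - m) := by omega
  rw [e, P.ofNat_add']
  have h2 : P.lt (P.add (P.ofNat m) P.zero) (P.add (P.ofNat m) (P.ofNat (n - m))) :=
    (P.add_lt_left_iff _ _ _).2 (P.ofNat_pos (by omega))
  rwa [P.add_zero] at h2

lemma ofNat_le' {m n : ℕ} (h : m ≤ n) : ¬ P.lt (P.ofNat n) (P.ofNat m) := by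
  have e : n = m + (n - m) := by omega
  rw [e, P.ofNat_add']
  intro hc
  have h2 : P.lt (P.add (P.ofNat m) (P.ofNat (n - m))) (P.add (P.ofNat m) P.zero) := by
    rwa [P.add_zero]
  exact P.ofNat_nonneg (n - m) ((P.add_lt_left_iff _ _ _).1 h2)

lemma ofNat_reflect {m n : ℕ} (h : P.lt (P.ofNat m) (P.ofNat n)) : m < n :=
  by_contra fun h' => P.ofNat_le' (Nat.le_of_not_lt h') h

lemma nsmul_pos {x : X} (hx : P.lt P.zero x) {n : ℕ} (hn : 0 < n) :
    P.lt P.zero (P.nsmul n x) := by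
  have h := P.nsmul_lt hx hn
  rwa [P.nsmul_zero''] at h

lemma mul_one_left {a : X} (ha : P.lt P.zero a) : P.mul P.one a = a := by
  rw [P.mul_comm P.one a P.zero_lt_one ha, P.mul_one a ha]

lemma mullt {a b c d : X} (ha : P.lt P.zero a) (hab : P.lt a b)
    (hc : P.lt P.zero c) (hcd : P.lt c d) : P.lt (P.mul a c) (P.mul b d) := by
  have hb := P.lt_trans' ha hab
  have hd := P.lt_trans' hc hcd
  have h1 : P.lt (P.mul a c) (P.mul b c) := (P.mul_lt_mul_iff a b c ha hb hc).2 hab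
  have h2 : P.lt (P.mul c b) (P.mul d b) := (P.mul_lt_mul_iff c d b hc hd hb).2 hcd
  rw [P.mul_comm c b hc hb, P.mul_comm d b hd hb] at h2
  exact P.lt_trans' h1 h2

lemma mul_nsmul_left {x y : X} (hx : P.lt P.zero x) (hy : P.lt P.zero y)
    {n : ℕ} (hn : 0 < n) : P.mul (P.nsmul n x) y = P.nsmul n (P.mul x y) := by
  induction n with
  | zero => exact absurd hn (by omega)
  | succ k ih =>
    rcases Nat.eq_zero_or_pos k with hk | hk
    · subst hk; rw [P.nsmul_one', P.nsmul_one']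
    · show P.mul (P.add (P.nsmul k x) x) y = P.add (P.nsmul k (P.mul x y)) (P.mul x y)
      rw [P.mul_add _ _ _ (P.nsmul_pos hx hk) hx hy, ih hk]

lemma ofNat_mul' {p q : ℕ} (hp : 0 < p) (hq : 0 < q) :
    P.ofNat (p * q) = P.mul (P.ofNat p) (P.ofNat q) := by
  have h1 : P.lt P.zero (P.ofNat q) := P.ofNat_pos hq
  rw [← P.nsmul_ofNat p q, show P.ofNat p = P.nsmul p P.one from rfl,
    P.mul_nsmul_left P.zero_lt_one h1 hp, P.mul_one_left h1]

lemma mul_nsmul_both {x y : X} (hx : P.lt P.zero x) (hy : P.lt P.zero y)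
    {kx ky : ℕ} (hkx : 0 < kx) (hky : 0 < ky) :
    P.mul (P.nsmul kx x) (P.nsmul ky y) = P.nsmul (kx * ky) (P.mul x y) := by
  have hky' : P.lt P.zero (P.nsmul ky y) := P.nsmul_pos hy hky
  rw [P.mul_nsmul_left hx hky' hkx, P.mul_comm x _ hx hky',
    P.mul_nsmul_left hy hx hky, P.mul_comm y x hy hx, ← P.nsmul_mul]

end Prestreak

lemma toNat_cast_sub (m : ℤ) : ((m.toNat : ℝ) - ((-m).toNat : ℝ)) = (m : ℝ) := by
  have h : (m.toNat : ℤ) - ((-m).toNat : ℤ) = m := by omega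
  have h2 := congrArg (fun z : ℤ => (z : ℝ)) h
  push_cast at h2
  linarith

lemma real_le_of_forall {r s : ℝ} (C : ℝ) (hC : 0 ≤ C)
    (h : ∀ t : ℕ, 0 < t → r ≤ s + C / t) : r ≤ s := by
  by_contra h'
  push_neg at h'
  obtain ⟨t, ht⟩ := exists_nat_gt (C / (r - s))
  have hrs : 0 < r - s := by linarith
  have ht0 : 0 < t := by
    by_contra h0
    have : t = 0 := by omega
    subst this
    simp only [Nat.cast_zero] at ht
    have : 0 ≤ C / (r - s) := div_nonneg hC hrs.le
    linarith
  have htR : (0:ℝ) < t := by exact_mod_cast ht0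
  have h2 : C / t < r - s := by
    rw [div_lt_iff₀ hrs] at ht
    rw [div_lt_iff₀ htR]
    nlinarith
  have := h t ht0
  linarith

namespace Prestreak

variable {X : Type*} (P : Prestreak X)

/-- `(a - b)/n < x`. -/
def bet (a b n : ℕ) (x : X) : Prop :=
  P.lt (P.ofNat a) (P.add (P.nsmul n x) (P.ofNat b))

/-- `x < (a - b)/n`. -/
def tel (x : X) (a b n : ℕ) : Prop :=
  P.lt (P.add (P.nsmul n x) (P.ofNat b)) (P.ofNat a)

lemma bet_shift {a b n : ℕ} {x : X} (c : ℕ) :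
    P.bet (a + c) (b + c) n x ↔ P.bet a b n x := by
  unfold bet
  rw [P.ofNat_add' a c, P.ofNat_add' b c, ← P.add_assoc]
  exact P.add_lt_add_iff _ _ _

lemma tel_shift {a b n : ℕ} {x : X} (c : ℕ) :
    P.tel x (a + c) (b + c) n ↔ P.tel x a b n := by
  unfold tel
  rw [P.ofNat_add' a c, P.ofNat_add' b c, ← P.add_assoc]
  exact P.add_lt_add_iff _ _ _

lemma bet_congr {a b a' b' n : ℕ} {x : X} (h : a + b' = a' + b)
    (H : P.bet a b n x) : P.bet a' b' n x := by
  have h1 : P.bet (a + b') (b + b') n x := (P.bet_shift b').2 H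
  rw [h, Nat.add_comm b b'] at h1
  exact (P.bet_shift b).1 h1

lemma tel_congr {a b a' b' n : ℕ} {x : X} (h : a + b' = a' + b)
    (H : P.tel x a b n) : P.tel x a' b' n := by
  have h1 : P.tel x (a + b') (b + b') n := (P.tel_shift b').2 H
  rw [h, Nat.add_comm b b'] at h1
  exact (P.tel_shift b).1 h1

lemma bet_scale {a b n : ℕ} {x : X} {k : ℕ} (hk : 0 < k) :
    P.bet (k * a) (k * b) (k * n) x ↔ P.bet a b n x := by
  unfold bet
  rw [← P.nsmul_ofNat k a, ← P.nsmul_ofNat k b, P.nsmul_mul k n, ← P.nsmul_add']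
  exact P.nsmul_lt_iff hk

lemma tel_scale {a b n : ℕ} {x : X} {k : ℕ} (hk : 0 < k) :
    P.tel x (k * a) (k * b) (k * n) ↔ P.tel x a b n := by
  unfold tel
  rw [← P.nsmul_ofNat k a, ← P.nsmul_ofNat k b, P.nsmul_mul k n, ← P.nsmul_add']
  exact P.nsmul_lt_iff hk

lemma cut_nat {a b n c d n' : ℕ} {x : X} (hn : 0 < n) (hn' : 0 < n')
    (h1 : P.bet a b n x) (h2 : P.tel x c d n') :
    n' * a + n * d < n * c + n' * b := by
  have H1 : P.bet (n' * a) (n' * b) (n' * n) x := (P.bet_scale hn').2 h1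
  have H2 : P.tel x (n * c) (n * d) (n * n') := (P.tel_scale hn).2 h2
  rw [show n' * n = n * n' from Nat.mul_comm n' n] at H1
  unfold bet at H1
  unfold tel at H2
  set B := P.nsmul (n * n') x with hB
  have s1 : P.lt (P.add (P.ofNat (n' * a)) (P.ofNat (n * d)))
      (P.add (P.add B (P.ofNat (n' * b))) (P.ofNat (n * d))) :=
    (P.add_lt_add_iff _ _ _).2 H1
  rw [P.add_right_comm' B (P.ofNat (n' * b)) (P.ofNat (n * d))] at s1
  have s3 : P.lt (P.add (P.add B (P.ofNat (n * d))) (P.ofNat (n' * b)))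
      (P.add (P.ofNat (n * c)) (P.ofNat (n' * b))) :=
    (P.add_lt_add_iff _ _ _).2 H2
  have key := P.lt_trans' s1 s3
  rw [← P.ofNat_add', ← P.ofNat_add'] at key
  exact P.ofNat_reflect key

lemma cut_le {a b n c d n' : ℕ} {x : X} (hn : 0 < n) (hn' : 0 < n')
    (h1 : P.bet a b n x) (h2 : P.tel x c d n') :
    ((a : ℝ) - b) / n ≤ ((c : ℝ) - d) / n' := by
  have hnat := P.cut_nat hn hn' h1 h2
  have hcast : (n' : ℝ) * a + n * d < n * c + n' * b := by exact_mod_cast hnat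
  rw [div_le_div_iff₀ (by exact_mod_cast hn) (by exact_mod_cast hn')]
  nlinarith

lemma cut_split {a b n c d n' : ℕ} (hn : 0 < n) (hn' : 0 < n') (x : X)
    (h : ((a : ℝ) - b) / n < ((c : ℝ) - d) / n') : P.bet a b n x ∨ P.tel x c d n' := by
  have hnat : n' * a + n * d < n * c + n' * b := by
    rw [div_lt_div_iff₀ (by exact_mod_cast hn) (by exact_mod_cast hn')] at h
    have : (n' : ℝ) * a + n * d < n * c + n' * b := by nlinarith
    exact_mod_cast this
  have key := P.ofNat_lt' hnat
  set B := P.nsmul (n * n') x with hB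
  rcases P.lt_cotrans _ _ (P.add B (P.ofNat (n' * b + n * d))) key with h' | h'
  · left
    rw [P.ofNat_add' (n' * a) (n * d), P.ofNat_add' (n' * b) (n * d), ← P.add_assoc] at h'
    have h2 : P.lt (P.ofNat (n' * a)) (P.add B (P.ofNat (n' * b))) :=
      (P.add_lt_add_iff _ _ _).1 h'
    have h3 : P.bet (n' * a) (n' * b) (n' * n) x := by
      unfold bet
      rwa [show n' * n = n * n' from Nat.mul_comm n' n]
    exact (P.bet_scale hn').1 h3
  · right
    rw [P.ofNat_add' (n' * b) (n * d), ← P.add_assoc,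
      P.add_right_comm' B (P.ofNat (n' * b)) (P.ofNat (n * d)),
      P.ofNat_add' (n * c) (n' * b)] at h'
    have h2 : P.lt (P.add B (P.ofNat (n * d))) (P.ofNat (n * c)) :=
      (P.add_lt_add_iff _ _ _).1 h'
    have h3 : P.tel x (n * c) (n * d) (n * n') := h2
    exact (P.tel_scale hn).1 h3

end Prestreak

namespace Prestreak

variable {X : Type*} (P : Prestreak X)

lemma arch_low (hA : P.Archimedean) (x : X) : ∃ k : ℕ, P.bet 0 k 1 x := by
  obtain ⟨k, hk⟩ := hA P.zero P.zero x P.one P.zero_lt_one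
  rw [P.nsmul_zero'', P.add_zero] at hk
  refine ⟨k, ?_⟩
  unfold bet
  rw [P.nsmul_one', P.ofNat_zero']
  exact hk

lemma arch_high (hA : P.Archimedean) (x : X) : ∃ k : ℕ, P.tel x k 0 1 := by
  obtain ⟨k, hk⟩ := hA x P.zero P.zero P.one P.zero_lt_one
  rw [P.nsmul_zero'', P.add_zero, P.zero_add'] at hk
  unfold tel
  refine ⟨k, ?_⟩
  rw [P.nsmul_one', P.ofNat_zero', P.add_zero]
  exact hk

lemma not_bet_tel {a b n : ℕ} {x : X} (h : ¬ P.bet a b n x) : P.tel x (a + 1) b n :=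
  P.le_lt' h (P.ofNat_lt' (Nat.lt_succ_self a))

lemma pinch (hA : P.Archimedean) (x : X) {n : ℕ} (hn : 0 < n) :
    ∃ m : ℤ, P.bet m.toNat (-m).toNat n x ∧
      P.tel x (m + 2).toNat (-(m + 2)).toNat n ∧
      ∀ m' : ℤ, P.bet m'.toNat (-m').toNat n x → m' ≤ m := by
  obtain ⟨k, hk⟩ := P.arch_low hA x
  obtain ⟨c, hc⟩ := P.arch_high hA x
  have hbd : ∀ m' : ℤ, P.bet m'.toNat (-m').toNat n x → m' ≤ (n * c : ℕ) := by
    intro m' hm'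
    have hle := P.cut_le hn Nat.one_pos hm' hc
    have hval : ((m'.toNat : ℝ) - ((-m').toNat : ℝ)) = (m' : ℝ) := toNat_cast_sub m'
    rw [hval] at hle
    have hc0 : ((c : ℝ) - (0:ℕ)) / (1:ℕ) = (c : ℝ) := by norm_num
    rw [hc0] at hle
    have hnR : (0:ℝ) < n := by exact_mod_cast hn
    rw [div_le_iff₀ hnR] at hle
    have : (m' : ℝ) ≤ ((n * c : ℕ) : ℝ) := by push_cast; nlinarith
    exact_mod_cast this
  have hne : P.bet ((-(n * k : ℕ) : ℤ)).toNat ((-(-(n * k : ℕ) : ℤ)).toNat) n x := by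
    have h1 : P.bet (n * 0) (n * k) (n * 1) x := (P.bet_scale hn).2 hk
    rw [Nat.mul_zero, Nat.mul_one] at h1
    have e1 : ((-(n * k : ℕ) : ℤ)).toNat = 0 := by omega
    have e2 : ((-(-(n * k : ℕ) : ℤ)).toNat) = n * k := by omega
    rw [e1, e2]
    exact h1
  obtain ⟨m, hm, hmax⟩ := Int.exists_greatest_of_bdd
    ⟨(n * c : ℕ), fun z hz => hbd z hz⟩ ⟨(-(n * k : ℕ) : ℤ), hne⟩
  refine ⟨m, hm, ?_, hmax⟩
  have hnot : ¬ P.bet (m + 1).toNat (-(m + 1)).toNat n x := fun h => by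
    have := hmax _ h; omega
  have htel := P.not_bet_tel hnot
  exact P.tel_congr (by omega) htel

/-- The embedding of a streak into the reals. -/
noncomputable def emb (x : X) : ℝ :=
  sSup {r : ℝ | ∃ a b n : ℕ, 0 < n ∧ P.bet a b n x ∧ r = ((a : ℝ) - b) / n}

lemma emb_bddAbove (hA : P.Archimedean) (x : X) :
    BddAbove {r : ℝ | ∃ a b n : ℕ, 0 < n ∧ P.bet a b n x ∧ r = ((a : ℝ) - b) / n} := by
  obtain ⟨c, hc⟩ := P.arch_high hA x
  refine ⟨(c : ℝ), ?_⟩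
  rintro r ⟨a, b, n, hn, hb, rfl⟩
  have := P.cut_le hn Nat.one_pos hb hc
  simpa using this

lemma emb_nonempty (hA : P.Archimedean) (x : X) :
    Set.Nonempty {r : ℝ | ∃ a b n : ℕ, 0 < n ∧ P.bet a b n x ∧ r = ((a : ℝ) - b) / n} := by
  obtain ⟨k, hk⟩ := P.arch_low hA x
  exact ⟨((0 : ℝ) - k) / 1, 0, k, 1, Nat.one_pos, hk, by norm_num⟩

lemma le_emb (hA : P.Archimedean) {a b n : ℕ} {x : X} (hn : 0 < n)
    (h : P.bet a b n x) : ((a : ℝ) - b) / n ≤ P.emb x :=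
  le_csSup (P.emb_bddAbove hA x) ⟨a, b, n, hn, h, rfl⟩

lemma emb_le (hA : P.Archimedean) {x : X} {a b n : ℕ} (hn : 0 < n)
    (h : P.tel x a b n) : P.emb x ≤ ((a : ℝ) - b) / n :=
  csSup_le (P.emb_nonempty hA x)
    (by rintro r ⟨a', b', n', hn', hb', rfl⟩; exact P.cut_le hn' hn hb' h)

lemma emb_eq (hA : P.Archimedean) (x : X) (r : ℝ)
    (h1 : ∀ a b n : ℕ, 0 < n → P.bet a b n x → ((a : ℝ) - b) / n ≤ r)
    (h2 : ∀ a b n : ℕ, 0 < n → P.tel x a b n → r ≤ ((a : ℝ) - b) / n) :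
    P.emb x = r := by
  apply le_antisymm
  · exact csSup_le (P.emb_nonempty hA x)
      (by rintro s ⟨a, b, n, hn, hb, rfl⟩; exact h1 a b n hn hb)
  · apply real_le_of_forall 2 (by norm_num)
    intro t ht
    obtain ⟨m, hm1, hm2, -⟩ := P.pinch hA x ht
    have e1 := P.le_emb hA ht hm1
    have e2 := h2 _ _ _ ht hm2
    rw [toNat_cast_sub] at e1
    rw [toNat_cast_sub] at e2
    have htR : (0:ℝ) < t := by exact_mod_cast ht
    push_cast at e2
    rw [show ((m:ℝ) + 2) / t = (m:ℝ)/t + 2/t from by ring] at e2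
    linarith

end Prestreak

namespace Prestreak

variable {X : Type*} (P : Prestreak X)

lemma bet_add {a b c d n : ℕ} {x y : X} (h1 : P.bet a b n x) (h2 : P.bet c d n y) :
    P.bet (a + c) (b + d) n (P.add x y) := by
  unfold bet at h1 h2 ⊢
  have h := P.addlt h1 h2
  rw [P.add_add_add_comm', ← P.nsmul_add', ← P.ofNat_add', ← P.ofNat_add'] at h
  exact h

lemma tel_add {a b c d n : ℕ} {x y : X} (h1 : P.tel x a b n) (h2 : P.tel y c d n) :
    P.tel (P.add x y) (a + c) (b + d) n := by
  unfold tel at h1 h2 ⊢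
  have h := P.addlt h1 h2
  rw [P.add_add_add_comm', ← P.nsmul_add', ← P.ofNat_add', ← P.ofNat_add'] at h
  exact h

lemma emb_zero (hA : P.Archimedean) : P.emb P.zero = 0 := by
  apply P.emb_eq hA
  · intro a b n hn hb
    unfold bet at hb
    rw [P.nsmul_zero'', P.zero_add'] at hb
    have := P.ofNat_reflect hb
    have hab : (a:ℝ) - b ≤ 0 := by
      have : (a:ℝ) < b := by exact_mod_cast this
      linarith
    exact div_nonpos_of_nonpos_of_nonneg hab (by positivity)
  · intro a b n hn hb
    unfold tel at hb
    rw [P.nsmul_zero'', P.zero_add'] at hb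
    have := P.ofNat_reflect hb
    have hab : (0:ℝ) ≤ (a:ℝ) - b := by
      have : (b:ℝ) < a := by exact_mod_cast this
      linarith
    positivity

lemma emb_one (hA : P.Archimedean) : P.emb P.one = 1 := by
  apply P.emb_eq hA
  · intro a b n hn hb
    unfold bet at hb
    rw [show P.nsmul n P.one = P.ofNat n from rfl, ← P.ofNat_add'] at hb
    have h := P.ofNat_reflect hb
    have hnR : (0:ℝ) < n := by exact_mod_cast hn
    rw [div_le_one hnR]
    have : (a:ℝ) < n + b := by exact_mod_cast h
    linarith
  · intro a b n hn hb
    unfold tel at hb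
    rw [show P.nsmul n P.one = P.ofNat n from rfl, ← P.ofNat_add'] at hb
    have h := P.ofNat_reflect hb
    have hnR : (0:ℝ) < n := by exact_mod_cast hn
    rw [le_div_iff₀ hnR]
    have : (n:ℝ) + b < a := by exact_mod_cast h
    linarith

lemma pinch' (hA : P.Archimedean) (x : X) {n : ℕ} (hn : 0 < n) :
    ∃ m : ℤ, P.bet m.toNat (-m).toNat n x ∧ P.tel x (m + 2).toNat (-(m + 2)).toNat n ∧
      ((m.toNat : ℝ) - (-m).toNat) / n ≤ P.emb x ∧
      P.emb x ≤ (((m + 2).toNat : ℝ) - (-(m + 2)).toNat) / n := by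
  obtain ⟨m, hm1, hm2, -⟩ := P.pinch hA x hn
  exact ⟨m, hm1, hm2, P.le_emb hA hn hm1, P.emb_le hA hn hm2⟩

lemma emb_add (hA : P.Archimedean) (x y : X) :
    P.emb (P.add x y) = P.emb x + P.emb y := by
  apply P.emb_eq hA
  · intro a b n hn hb
    apply real_le_of_forall 4 (by norm_num)
    intro t ht
    obtain ⟨m1, hx1, hx2, e1, e2⟩ := P.pinch' hA x ht
    obtain ⟨m2, hy1, hy2, e3, e4⟩ := P.pinch' hA y ht
    have hsum := P.tel_add hx2 hy2
    have hle := P.cut_le hn ht hb hsum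
    rw [toNat_cast_sub] at e1 e3
    have hval : ((((m1+2).toNat + (m2+2).toNat : ℕ)) : ℝ)
        - (((-(m1+2)).toNat + (-(m2+2)).toNat : ℕ) : ℝ) = (m1 : ℝ) + m2 + 4 := by
      have hz : (((m1+2).toNat + (m2+2).toNat : ℤ))
          - (((-(m1+2)).toNat + (-(m2+2)).toNat : ℤ)) = m1 + m2 + 4 := by omega
      have := congrArg (fun z : ℤ => (z : ℝ)) hz
      push_cast at this ⊢
      linarith
    rw [hval] at hle
    have htR : (0:ℝ) < t := by exact_mod_cast ht
    rw [show ((m1:ℝ) + m2 + 4) / t = (m1:ℝ)/t + (m2:ℝ)/t + 4/t from by ring] at hle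
    linarith
  · intro a b n hn hb
    apply real_le_of_forall 4 (by norm_num)
    intro t ht
    obtain ⟨m1, hx1, hx2, e1, e2⟩ := P.pinch' hA x ht
    obtain ⟨m2, hy1, hy2, e3, e4⟩ := P.pinch' hA y ht
    have hsum := P.bet_add hx1 hy1
    have hle := P.cut_le ht hn hsum hb
    rw [toNat_cast_sub] at e2 e4
    have hval : (((m1.toNat + m2.toNat : ℕ)) : ℝ)
        - ((((-m1).toNat + (-m2).toNat : ℕ)) : ℝ) = (m1 : ℝ) + m2 := by
      have hz : ((m1.toNat + m2.toNat : ℤ)) - (((-m1).toNat + (-m2).toNat : ℤ))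
          = m1 + m2 := by omega
      have := congrArg (fun z : ℤ => (z : ℝ)) hz
      push_cast at this ⊢
      linarith
    rw [hval] at hle
    have htR : (0:ℝ) < t := by exact_mod_cast ht
    push_cast at e2 e4
    rw [show ((m1:ℝ) + m2) / t = (m1:ℝ)/t + (m2:ℝ)/t from by ring] at hle
    rw [show ((m1:ℝ) + 2) / t = (m1:ℝ)/t + 2/t from by ring] at e2
    rw [show ((m2:ℝ) + 2) / t = (m2:ℝ)/t + 2/t from by ring] at e4
    have h24 : (4:ℝ)/t = 2/t + 2/t := by ring
    linarith

lemma emb_lt (hA : P.Archimedean) {x y : X} (h : P.lt x y) :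
    P.emb x < P.emb y := by
  obtain ⟨n, hn⟩ := hA (P.ofNat 3) x P.zero y h
  rw [P.zero_add'] at hn
  have hn0 : 0 < n := by
    rcases Nat.eq_zero_or_pos n with h0 | h0
    · subst h0
      rw [show P.nsmul 0 x = P.zero from rfl, show P.nsmul 0 y = P.zero from rfl,
        P.add_zero] at hn
      exact absurd hn (P.ofNat_nonneg 3)
    · exact h0
  obtain ⟨m, hm1, hm2, e1, e2⟩ := P.pinch' hA x hn0
  have hy : P.bet (m.toNat + 3) ((-m).toNat) n y := by
    unfold bet at hm1 ⊢
    have s1 : P.lt (P.ofNat (m.toNat + 3))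
        (P.add (P.add (P.nsmul n x) (P.ofNat (-m).toNat)) (P.ofNat 3)) := by
      rw [P.ofNat_add']
      exact (P.add_lt_add_iff _ _ _).2 hm1
    rw [P.add_right_comm', P.add_comm (P.nsmul n x) (P.ofNat 3)] at s1
    have s3 : P.lt (P.add (P.add (P.ofNat 3) (P.nsmul n x)) (P.ofNat (-m).toNat))
        (P.add (P.nsmul n y) (P.ofNat (-m).toNat)) :=
      (P.add_lt_add_iff _ _ _).2 hn
    exact P.lt_trans' s1 s3
  have e3 := P.le_emb hA hn0 hy
  rw [toNat_cast_sub] at e2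
  have hval : ((m.toNat + 3 : ℕ) : ℝ) - ((-m).toNat : ℝ) = (m : ℝ) + 3 := by
    have hz : ((m.toNat + 3 : ℕ) : ℤ) - ((-m).toNat : ℤ) = m + 3 := by omega
    have := congrArg (fun z : ℤ => (z : ℝ)) hz
    push_cast at this ⊢
    linarith
  rw [hval] at e3
  push_cast at e2
  have htR : (0:ℝ) < n := by exact_mod_cast hn0
  have hlt : ((m:ℝ) + 2) / n < ((m:ℝ) + 3) / n := by
    rw [div_lt_div_iff₀ htR htR]
    nlinarith
  linarith

end Prestreak

lemma real_mul_bound {a b c d D : ℝ} (hD : 1 ≤ D) (hb : 0 ≤ b) (hc0 : 0 ≤ c)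
    (hd0 : 0 ≤ d) (h1 : a ≤ c + 2 / D) (h2 : b ≤ d + 2 / D) :
    a * b ≤ c * d + (2 * c + 2 * d + 4) / D := by
  have hD0 : (0:ℝ) < D := by linarith
  have key : a * b ≤ (c + 2 / D) * (d + 2 / D) :=
    mul_le_mul h1 h2 hb (by positivity)
  have e : (c + 2 / D) * (d + 2 / D)
      = c * d + (2 * c + 2 * d + 4) / D - 4 / D + (2 / D) * (2 / D) := by
    field_simp
    ring
  have e1 : (2:ℝ) / D ≤ 2 := by
    rw [div_le_iff₀ hD0]; nlinarith
  have e2 : (0:ℝ) ≤ 2 / D := by positivity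
  have e3 : (2 / D) * (2 / D) ≤ 2 * (2 / D) := mul_le_mul_of_nonneg_right e1 e2
  have e4 : 2 * (2 / D) = 4 / D := by ring
  linarith

namespace Prestreak

variable {X : Type*} (P : Prestreak X)

lemma bet_mul {x y : X} (hx : P.lt P.zero x) (hy : P.lt P.zero y)
    {p q kx ky : ℕ} (hp : 0 < p) (hq : 0 < q) (hkx : 0 < kx) (hky : 0 < ky)
    (h1 : P.bet p 0 kx x) (h2 : P.bet q 0 ky y) :
    P.bet (p * q) 0 (kx * ky) (P.mul x y) := by
  unfold bet at h1 h2 ⊢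
  rw [P.ofNat_zero', P.add_zero] at h1 h2 ⊢
  rw [P.ofNat_mul' hp hq, ← P.mul_nsmul_both hx hy hkx hky]
  exact P.mullt (P.ofNat_pos hp) h1 (P.ofNat_pos hq) h2

lemma tel_mul {x y : X} (hx : P.lt P.zero x) (hy : P.lt P.zero y)
    {c d kx ky : ℕ} (hkx : 0 < kx) (hky : 0 < ky)
    (h1 : P.tel x c 0 kx) (h2 : P.tel y d 0 ky) :
    P.tel (P.mul x y) (c * d) 0 (kx * ky) := by
  unfold tel at h1 h2 ⊢
  rw [P.ofNat_zero', P.add_zero] at h1 h2 ⊢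
  have hxp := P.nsmul_pos hx hkx
  have hyp := P.nsmul_pos hy hky
  have hc : 0 < c := by
    have h := P.lt_trans' hxp h1
    rw [← P.ofNat_zero'] at h
    exact P.ofNat_reflect h
  have hd : 0 < d := by
    have h := P.lt_trans' hyp h2
    rw [← P.ofNat_zero'] at h
    exact P.ofNat_reflect h
  rw [P.ofNat_mul' hc hd, ← P.mul_nsmul_both hx hy hkx hky]
  exact P.mullt hxp h1 hyp h2

lemma pos_low (hA : P.Archimedean) {x : X} (hx : P.lt P.zero x) :
    ∃ u : ℕ, 0 < u ∧ P.bet 1 0 u x := by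
  obtain ⟨u, hu⟩ := hA P.one P.zero P.zero x hx
  rw [P.nsmul_zero'', P.add_zero, P.zero_add'] at hu
  have hu0 : 0 < u := by
    rcases Nat.eq_zero_or_pos u with h0 | h0
    · subst h0
      exact absurd hu (P.asymm' P.zero_lt_one)
    · exact h0
  refine ⟨u, hu0, ?_⟩
  unfold bet
  rw [P.ofNat_one', P.ofNat_zero', P.add_zero]
  exact hu

lemma emb_pos (hA : P.Archimedean) {x : X} (hx : P.lt P.zero x) : 0 < P.emb x := by
  have h := P.emb_lt hA hx
  rwa [P.emb_zero hA] at h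

lemma pinch_pos (hA : P.Archimedean) {x : X} (hx : P.lt P.zero x)
    {t : ℕ} (ht : 0 < t) :
    ∃ u a : ℕ, 0 < u ∧ t ≤ a ∧ P.bet a 0 (t * u) x ∧ P.tel x (a + 2) 0 (t * u) ∧
      ((a : ℝ)) / ((t * u : ℕ) : ℝ) ≤ P.emb x ∧
      P.emb x ≤ ((a : ℝ) + 2) / ((t * u : ℕ) : ℝ) := by
  obtain ⟨u, hu, hlow⟩ := P.pos_low hA hx
  have htu : 0 < t * u := Nat.mul_pos ht hu
  obtain ⟨m, hm1, hm2, hmax⟩ := P.pinch hA x htu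
  have hbt : P.bet ((t : ℤ)).toNat ((-(t : ℤ))).toNat (t * u) x := by
    rw [show ((t : ℤ)).toNat = t by omega, show ((-(t : ℤ))).toNat = 0 by omega]
    have h1 : P.bet (t * 1) (t * 0) (t * u) x := (P.bet_scale ht).2 hlow
    rwa [Nat.mul_one, Nat.mul_zero] at h1
  have hmt : (t : ℤ) ≤ m := hmax _ hbt
  have hm0 : 0 ≤ m := by omega
  rw [show (-m).toNat = 0 by omega] at hm1
  rw [show (m + 2).toNat = m.toNat + 2 by omega, show (-(m + 2)).toNat = 0 by omega] at hm2
  refine ⟨u, m.toNat, hu, by omega, hm1, hm2, ?_, ?_⟩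
  · have h := P.le_emb hA htu hm1
    simpa using h
  · have h := P.emb_le hA htu hm2
    push_cast at h ⊢
    convert h using 2
    norm_num

lemma emb_mul (hA : P.Archimedean) {x y : X} (hx : P.lt P.zero x)
    (hy : P.lt P.zero y) : P.emb (P.mul x y) = P.emb x * P.emb y := by
  have hex := P.emb_pos hA hx
  have hey := P.emb_pos hA hy
  apply P.emb_eq hA
  · intro a b n hn hb
    apply real_le_of_forall (2 * P.emb x + 2 * P.emb y + 4) (by linarith)
    intro t ht
    obtain ⟨u, a1, hu, ha1, hx1, hx2, e1, e2⟩ := P.pinch_pos hA hx ht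
    obtain ⟨v, a2, hv, ha2, hy1, hy2, e3, e4⟩ := P.pinch_pos hA hy ht
    have htel := P.tel_mul hx hy (Nat.mul_pos ht hu) (Nat.mul_pos ht hv) hx2 hy2
    have hle := P.cut_le hn (Nat.mul_pos (Nat.mul_pos ht hu) (Nat.mul_pos ht hv)) hb htel
    have htR : (0:ℝ) < t := by exact_mod_cast ht
    have htR1 : (1:ℝ) ≤ t := by exact_mod_cast ht
    have htuR : (0:ℝ) < ((t * u : ℕ) : ℝ) := by exact_mod_cast Nat.mul_pos ht hu
    have htvR : (0:ℝ) < ((t * v : ℕ) : ℝ) := by exact_mod_cast Nat.mul_pos ht hv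
    have htu_ge : (t:ℝ) ≤ ((t * u : ℕ) : ℝ) := by
      have : t ≤ t * u := Nat.le_mul_of_pos_right t hu
      exact_mod_cast this
    have htv_ge : (t:ℝ) ≤ ((t * v : ℕ) : ℝ) := by
      have : t ≤ t * v := Nat.le_mul_of_pos_right t hv
      exact_mod_cast this
    have h2tu : (2:ℝ) / ((t * u : ℕ) : ℝ) ≤ 2 / t := by
      apply div_le_div_of_nonneg_left (by norm_num) htR htu_ge
    have h2tv : (2:ℝ) / ((t * v : ℕ) : ℝ) ≤ 2 / t := by
      apply div_le_div_of_nonneg_left (by norm_num) htR htv_ge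
    -- hle : ((a:ℝ) - b)/n ≤ (((a1+2)*(a2+2) : ℕ) - (0:ℕ))/((t*u)*(t*v) : ℕ)
    have hval : ((((a1 + 2) * (a2 + 2) : ℕ) : ℝ) - ((0:ℕ) : ℝ))
        / (((t * u) * (t * v) : ℕ) : ℝ)
        = (((a1:ℝ) + 2) / ((t * u : ℕ) : ℝ)) * (((a2:ℝ) + 2) / ((t * v : ℕ) : ℝ)) := by
      rw [div_mul_div_comm]
      push_cast
      ring
    rw [hval] at hle
    have hp1 : ((a1:ℝ) + 2) / ((t * u : ℕ) : ℝ) ≤ P.emb x + 2 / t := by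
      have : ((a1:ℝ) + 2) / ((t * u : ℕ) : ℝ)
          = (a1:ℝ) / ((t * u : ℕ) : ℝ) + 2 / ((t * u : ℕ) : ℝ) := by ring
      rw [this]
      linarith
    have hp2 : ((a2:ℝ) + 2) / ((t * v : ℕ) : ℝ) ≤ P.emb y + 2 / t := by
      have : ((a2:ℝ) + 2) / ((t * v : ℕ) : ℝ)
          = (a2:ℝ) / ((t * v : ℕ) : ℝ) + 2 / ((t * v : ℕ) : ℝ) := by ring
      rw [this]
      linarith
    have hq0 : (0:ℝ) ≤ ((a2:ℝ) + 2) / ((t * v : ℕ) : ℝ) := by positivity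
    have hbound := real_mul_bound htR1 hq0 hex.le hey.le hp1 hp2
    linarith
  · intro a b n hn hb
    apply real_le_of_forall (2 * P.emb x + 2 * P.emb y + 4) (by linarith)
    intro t ht
    obtain ⟨u, a1, hu, ha1, hx1, hx2, e1, e2⟩ := P.pinch_pos hA hx ht
    obtain ⟨v, a2, hv, ha2, hy1, hy2, e3, e4⟩ := P.pinch_pos hA hy ht
    have hbet := P.bet_mul hx hy (by omega) (by omega)
      (Nat.mul_pos ht hu) (Nat.mul_pos ht hv) hx1 hy1
    have hle := P.cut_le (Nat.mul_pos (Nat.mul_pos ht hu) (Nat.mul_pos ht hv)) hn hbet hb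
    have htR : (0:ℝ) < t := by exact_mod_cast ht
    have htR1 : (1:ℝ) ≤ t := by exact_mod_cast ht
    have htuR : (0:ℝ) < ((t * u : ℕ) : ℝ) := by exact_mod_cast Nat.mul_pos ht hu
    have htvR : (0:ℝ) < ((t * v : ℕ) : ℝ) := by exact_mod_cast Nat.mul_pos ht hv
    have htu_ge : (t:ℝ) ≤ ((t * u : ℕ) : ℝ) := by
      have : t ≤ t * u := Nat.le_mul_of_pos_right t hu
      exact_mod_cast this
    have htv_ge : (t:ℝ) ≤ ((t * v : ℕ) : ℝ) := by
      have : t ≤ t * v := Nat.le_mul_of_pos_right t hv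
      exact_mod_cast this
    have h2tu : (2:ℝ) / ((t * u : ℕ) : ℝ) ≤ 2 / t := by
      apply div_le_div_of_nonneg_left (by norm_num) htR htu_ge
    have h2tv : (2:ℝ) / ((t * v : ℕ) : ℝ) ≤ 2 / t := by
      apply div_le_div_of_nonneg_left (by norm_num) htR htv_ge
    have hval : (((a1 * a2 : ℕ) : ℝ) - ((0:ℕ) : ℝ)) / (((t * u) * (t * v) : ℕ) : ℝ)
        = ((a1:ℝ) / ((t * u : ℕ) : ℝ)) * ((a2:ℝ) / ((t * v : ℕ) : ℝ)) := by
      rw [div_mul_div_comm]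
      push_cast
      ring
    rw [hval] at hle
    set p := (a1:ℝ) / ((t * u : ℕ) : ℝ) with hp
    set q := (a2:ℝ) / ((t * v : ℕ) : ℝ) with hq
    have hp0 : 0 ≤ p := by positivity
    have hq0 : 0 ≤ q := by positivity
    have hxp : P.emb x ≤ p + 2 / t := by
      have e : ((a1:ℝ) + 2) / ((t * u : ℕ) : ℝ) = p + 2 / ((t * u : ℕ) : ℝ) := by
        rw [hp]; ring
      rw [e] at e2
      linarith
    have hyq : P.emb y ≤ q + 2 / t := by
      have e : ((a2:ℝ) + 2) / ((t * v : ℕ) : ℝ) = q + 2 / ((t * v : ℕ) : ℝ) := by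
        rw [hq]; ring
      rw [e] at e4
      linarith
    have hbound := real_mul_bound htR1 hey.le hp0 hq0 hxp hyq
    have hmono : (2 * p + 2 * q + 4) / (t:ℝ) ≤ (2 * P.emb x + 2 * P.emb y + 4) / t := by
      gcongr
    linarith

end Prestreak

lemma real_nsmul (n : ℕ) (x : ℝ) : realPrestreak.nsmul n x = n * x := by
  induction n with
  | zero => show (0:ℝ) = ((0:ℕ):ℝ) * x; simp
  | succ k ih =>
    show realPrestreak.nsmul k x + x = ((k + 1 : ℕ):ℝ) * x
    rw [ih]; push_cast; ring

namespace Prestreak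

variable {X : Type*} (P : Prestreak X)

lemma hom_nsmul {f : X → ℝ} (hf : P.IsHom realPrestreak f) (n : ℕ) (x : X) :
    f (P.nsmul n x) = n * f x := by
  induction n with
  | zero =>
    show f P.zero = ((0:ℕ):ℝ) * f x
    rw [hf.2.2.1]; show (0:ℝ) = ((0:ℕ):ℝ) * f x; simp
  | succ k ih =>
    show f (P.add (P.nsmul k x) x) = ((k + 1 : ℕ):ℝ) * f x
    rw [hf.2.1, ih]
    show (k:ℝ) * f x + f x = ((k + 1 : ℕ):ℝ) * f x
    push_cast; ring

lemma hom_ofNat {f : X → ℝ} (hf : P.IsHom realPrestreak f) (n : ℕ) :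
    f (P.ofNat n) = n := by
  show f (P.nsmul n P.one) = n
  rw [P.hom_nsmul hf, hf.2.2.2.1]
  show (n:ℝ) * 1 = n; ring

lemma hom_eq_emb (hA : P.Archimedean) {f : X → ℝ} (hf : P.IsHom realPrestreak f)
    (x : X) : f x = P.emb x := by
  refine (P.emb_eq hA x (f x) ?_ ?_).symm
  · intro a b n hn hb
    have h := hf.1 _ _ hb
    rw [hf.2.1, P.hom_ofNat hf, P.hom_nsmul hf, P.hom_ofNat hf] at h
    have h' : (a:ℝ) < n * f x + b := h
    have hnR : (0:ℝ) < n := by exact_mod_cast hn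
    rw [div_le_iff₀ hnR]
    nlinarith
  · intro a b n hn hb
    have h := hf.1 _ _ hb
    rw [hf.2.1, P.hom_ofNat hf, P.hom_nsmul hf, P.hom_ofNat hf] at h
    have h' : (n:ℝ) * f x + b < a := h
    have hnR : (0:ℝ) < n := by exact_mod_cast hn
    rw [le_div_iff₀ hnR]
    nlinarith

lemma emb_isHom (hA : P.Archimedean) : P.IsHom realPrestreak P.emb := by
  refine ⟨?_, ?_, ?_, ?_, ?_⟩
  · intro a b h
    exact P.emb_lt hA h
  · intro a b
    exact P.emb_add hA a b
  · exact P.emb_zero hA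
  · exact P.emb_one hA
  · intro a b ha hb
    exact P.emb_mul hA ha hb

end Prestreak

/-- `ℝ` is a streak (a tight archimedean prestreak) and is the terminal
streak: every streak admits exactly one prestreak morphism into `ℝ`. -/
theorem real_terminal_streak :
    realPrestreak.Archimedean ∧ realPrestreak.Tight ∧
      ∀ {X : Type u} (P : Prestreak X), P.Archimedean → P.Tight →
        ∃! f : X → ℝ, P.IsHom realPrestreak f := by
  refine ⟨?_, ?_, ?_⟩
  · intro a b c d h
    have h' : b < d := h
    obtain ⟨n, hn⟩ := exists_nat_gt ((a - c) / (d - b))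
    refine ⟨n, ?_⟩
    show a + realPrestreak.nsmul n b < c + realPrestreak.nsmul n d
    rw [real_nsmul, real_nsmul]
    have hdb : (0:ℝ) < d - b := by linarith
    rw [div_lt_iff₀ hdb] at hn
    nlinarith
  · intro a b h1 h2
    exact le_antisymm (not_lt.1 h2) (not_lt.1 h1)
  · intro X P hA _
    exact ⟨P.emb, P.emb_isHom hA, fun g hg => funext fun x => P.hom_eq_emb hA hg x⟩
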